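/- For any real unit vectors n = (cos θ, sin θ) and t = (−sin θ, cos θ), and any scalars μ, λ, the normal traction of the radially symmetric field u = (J(ar) cos θ, J(ar) sin θ) on the circle r = R has first component (λ (J'(aR)·a + J(aR)/R) + 2μ a J'(aR)) cos θ and second component (λ (a J'(aR) + J(aR)/R) + 2μ a J'(aR)) sin θ, i.e., σ(u)n is a scalar multiple of n. -/

import Mathlib

open Matrix

/-- For the radially symmetric field `u(x) = J(a|x|) x/|x|` and unit normal
`n = (cos θ, sin θ)` at the boundary point `R·n` of the disk of radius `R`, the
traction `σ(u)n` (with `σ(u) = 2μ ε(u) + λ tr(ε(u)) I`) has components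
`(λ(a J'(aR) + J(aR)/R) + 2μ a J'(aR)) cos θ` and
`(λ(a J'(aR) + J(aR)/R) + 2μ a J'(aR)) sin θ`; in particular it is a scalar multiple
of `n`. -/
theorem radial_traction_is_normal
    (μ lam a R θ : ℝ) (hR : 0 < R)
    (J : ℝ → ℝ) (hJ : ContDiff ℝ 2 J)
    (u : EuclideanSpace ℝ (Fin 2) → EuclideanSpace ℝ (Fin 2))
    (hu : ∀ x : EuclideanSpace ℝ (Fin 2), x ≠ 0 → u x = (J (a * ‖x‖) / ‖x‖) • x)
    (nv : Fin 2 → ℝ) (hnv : nv = ![Real.cos θ, Real.sin θ])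
    (p : EuclideanSpace ℝ (Fin 2)) (hp : ∀ i, p i = R * nv i)
    (gradu : Matrix (Fin 2) (Fin 2) ℝ)
    (hgrad : ∀ i j, gradu i j = fderiv ℝ u p (EuclideanSpace.single j (1 : ℝ)) i)
    (ε : Matrix (Fin 2) (Fin 2) ℝ) (hε : ε = (2 : ℝ)⁻¹ • (gradu + graduᵀ))
    (σ : Matrix (Fin 2) (Fin 2) ℝ)
    (hσ : σ = (2 * μ) • ε + (lam * ε.trace) • (1 : Matrix (Fin 2) (Fin 2) ℝ)) :
    σ.mulVec nv 0 =
        (lam * (a * deriv J (a * R) + J (a * R) / R) + 2 * μ * a * deriv J (a * R)) *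
          Real.cos θ ∧
    σ.mulVec nv 1 =
        (lam * (a * deriv J (a * R) + J (a * R) / R) + 2 * μ * a * deriv J (a * R)) *
          Real.sin θ ∧
    σ.mulVec nv =
      (lam * (a * deriv J (a * R) + J (a * R) / R) + 2 * μ * a * deriv J (a * R)) • nv := by
  have hRne : R ≠ 0 := hR.ne'
  have hpythag : Real.cos θ ^ 2 + Real.sin θ ^ 2 = 1 := by
    rw [add_comm]; exact Real.sin_sq_add_cos_sq θ
  -- ‖p‖ = R
  have hpn : ‖p‖ = R := by
    rw [EuclideanSpace.norm_eq]
    have : ∑ i : Fin 2, ‖p i‖ ^ 2 = R ^ 2 := by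
      simp only [Fin.sum_univ_two, hp, hnv, Real.norm_eq_abs, sq_abs,
        Matrix.cons_val_zero, Matrix.cons_val_one, Matrix.head_cons]
      nlinarith [hpythag]
    rw [this, Real.sqrt_sq hR.le]
  have hp0 : p ≠ 0 := by
    intro h
    rw [h] at hpn
    simp at hpn
    exact hRne hpn.symm
  -- derivative of the norm at p
  have hnsq : HasFDerivAt (fun x : EuclideanSpace ℝ (Fin 2) => ‖x‖ ^ 2)
      (2 • (innerSL ℝ p)) p := (hasStrictFDerivAt_norm_sq p).hasFDerivAt
  have hsqne : ‖p‖ ^ 2 ≠ 0 := by rw [hpn]; positivity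
  have hsqrt : HasDerivAt (fun x : ℝ => √x) (1 / (2 * √(‖p‖ ^ 2))) (‖p‖ ^ 2) :=
    Real.hasDerivAt_sqrt hsqne
  have h_norm : HasFDerivAt (fun x : EuclideanSpace ℝ (Fin 2) => ‖x‖)
      ((1 / (2 * √(‖p‖ ^ 2))) • (2 • (innerSL ℝ p))) p := by
    have := hsqrt.comp_hasFDerivAt p hnsq
    refine this.congr_of_eventuallyEq (Filter.Eventually.of_forall fun x => ?_)
    simp [Real.sqrt_sq (norm_nonneg x)]
  -- derivative of x ↦ J (a * ‖x‖)
  have hJ' : HasDerivAt J (deriv J (a * ‖p‖)) (a * ‖p‖) :=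
    ((hJ.differentiable two_ne_zero) (a * ‖p‖)).hasDerivAt
  have h1 : HasFDerivAt (fun x : EuclideanSpace ℝ (Fin 2) => a * ‖x‖)
      (a • ((1 / (2 * √(‖p‖ ^ 2))) • (2 • (innerSL ℝ p)))) p := h_norm.const_mul a
  have h2 : HasFDerivAt (fun x : EuclideanSpace ℝ (Fin 2) => J (a * ‖x‖))
      (deriv J (a * ‖p‖) • (a • ((1 / (2 * √(‖p‖ ^ 2))) • (2 • (innerSL ℝ p))))) p :=
    hJ'.comp_hasFDerivAt p h1
  -- derivative of x ↦ ‖x‖⁻¹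
  have hnne : ‖p‖ ≠ 0 := by rw [hpn]; exact hRne
  have hinv0 : HasDerivAt (fun y : ℝ => y⁻¹) (-(‖p‖ ^ 2)⁻¹) ‖p‖ := hasDerivAt_inv hnne
  have hinv : HasFDerivAt (fun x : EuclideanSpace ℝ (Fin 2) => ‖x‖⁻¹)
      ((-(‖p‖ ^ 2)⁻¹) • ((1 / (2 * √(‖p‖ ^ 2))) • (2 • (innerSL ℝ p)))) p :=
    hinv0.comp_hasFDerivAt p h_norm
  -- derivative of φ = J(a‖x‖) * ‖x‖⁻¹ then of u
  have hmul := h2.mul hinv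
  have hsmul := hmul.smul (hasFDerivAt_id p)
  have huF : HasFDerivAt u
      (((fun x : EuclideanSpace ℝ (Fin 2) => J (a * ‖x‖) * ‖x‖⁻¹) p •
          (ContinuousLinearMap.id ℝ (EuclideanSpace ℝ (Fin 2))) +
        (J (a * ‖p‖) • ((-(‖p‖ ^ 2)⁻¹) • ((1 / (2 * √(‖p‖ ^ 2))) • (2 • (innerSL ℝ p)))) +
          ‖p‖⁻¹ • (deriv J (a * ‖p‖) •
            (a • ((1 / (2 * √(‖p‖ ^ 2))) • (2 • (innerSL ℝ p)))))).smulRight p)) p := by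
    refine hsmul.congr_of_eventuallyEq ?_
    have hopen : IsOpen {x : EuclideanSpace ℝ (Fin 2) | x ≠ 0} := isOpen_ne
    filter_upwards [hopen.mem_nhds hp0] with x hx
    rw [hu x hx, div_eq_mul_inv]; rfl
  have hfd := huF.fderiv
  -- entries of gradu
  have hkey : ∀ i j, gradu i j = (J (a * R) / R) * (if i = j then 1 else 0) +
      ((a * deriv J (a * R) - J (a * R) / R) / R ^ 2) * (p i * p j) := by
    intro i j
    rw [hgrad, hfd]
    have hs : √(‖p‖ ^ 2) = R := by rw [Real.sqrt_sq (norm_nonneg p), hpn]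
    have hinnerv : (innerSL ℝ p) (EuclideanSpace.single j (1 : ℝ)) = p j := by
      simp [EuclideanSpace.inner_single_right]
    simp only [ContinuousLinearMap.add_apply, ContinuousLinearMap.smul_apply,
      ContinuousLinearMap.smulRight_apply, ContinuousLinearMap.id_apply, hinnerv, hs, hpn,
      PiLp.add_apply, PiLp.smul_apply, smul_eq_mul, EuclideanSpace.single_apply]
    by_cases hij : i = j <;> simp [hij, Real.sqrt_sq hR.le] <;> field_simp <;> ring
  have hg : ∀ i j, gradu i j = (J (a * R) / R) * (if i = j then 1 else 0) +
      (a * deriv J (a * R) - J (a * R) / R) * (nv i * nv j) := by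
    intro i j
    rw [hkey i j, hp i, hp j]
    by_cases hij : i = j <;> simp [hij] <;> field_simp <;> ring
  have h0 : σ.mulVec nv 0 =
      (lam * (a * deriv J (a * R) + J (a * R) / R) + 2 * μ * a * deriv J (a * R)) *
        Real.cos θ := by
    simp only [hσ, hε, Matrix.mulVec, dotProduct, Fin.sum_univ_two, Matrix.add_apply,
      Matrix.smul_apply, Matrix.one_apply, Matrix.trace_fin_two, Matrix.transpose_apply,
      Pi.add_apply, Pi.smul_apply, smul_eq_mul, hg, hnv, Matrix.cons_val_zero,
      Matrix.cons_val_one, Matrix.head_cons]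
    simp only [if_true, if_pos rfl]
    norm_num
    linear_combination ((2 * μ + lam) * (a * deriv J (a * R) - J (a * R) / R) * Real.cos θ) *
      hpythag
  have h1 : σ.mulVec nv 1 =
      (lam * (a * deriv J (a * R) + J (a * R) / R) + 2 * μ * a * deriv J (a * R)) *
        Real.sin θ := by
    simp only [hσ, hε, Matrix.mulVec, dotProduct, Fin.sum_univ_two, Matrix.add_apply,
      Matrix.smul_apply, Matrix.one_apply, Matrix.trace_fin_two, Matrix.transpose_apply,
      Pi.add_apply, Pi.smul_apply, smul_eq_mul, hg, hnv, Matrix.cons_val_zero,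
      Matrix.cons_val_one, Matrix.head_cons]
    norm_num
    linear_combination ((2 * μ + lam) * (a * deriv J (a * R) - J (a * R) / R) * Real.sin θ) *
      hpythag
  refine ⟨h0, h1, ?_⟩
  funext i
  fin_cases i
  · simpa [hnv] using h0
  · simpa [hnv] using h1
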